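/- Consider the root system Φ of type E_7 with Weyl group W = W(E_7) containing W(A_7) ≅ S_8 via the sub-root system Φ' of type A_7 of the extended Dynkin diagram. The action of S_8 on Φ has exactly two orbits, of sizes 56 and 70; moreover the action of the alternating subgroup A_8 ⊂ S_8 also has exactly two orbits on Φ, again of sizes 56 and 70. -/

import Mathlib

/-- The 56 roots of the sub-root system `Φ' ⊆ Φ(E_7)` of type `A_7`, in the standard
model of `E_7` inside `{x ∈ ℝ^8 : Σ x = 0}`: the vectors `e_i - e_j`, `i ≠ j`. -/
def E7rootsA7 : Set (Fin 8 → ℝ) :=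
  {v | ∃ i j : Fin 8, i ≠ j ∧ v = Pi.single i 1 - Pi.single j 1}

/-- The remaining 70 roots of `E_7`: the vectors all of whose coordinates are `±1/2`,
summing to `0` (four coordinates of each sign). -/
def E7rootsOther : Set (Fin 8 → ℝ) :=
  {v | (∀ i, v i = 1 / 2 ∨ v i = -(1 / 2)) ∧ ∑ i, v i = 0}


open Finset Equiv

noncomputable def rvec (i j : Fin 8) : Fin 8 → ℝ := Pi.single i 1 - Pi.single j 1

lemma rvec_apply (i j k : Fin 8) :
    rvec i j k = (if k = i then (1:ℝ) else 0) - (if k = j then 1 else 0) := by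
  simp [rvec, Pi.single_apply]

lemma rvec_inj {i j k l : Fin 8} (hij : i ≠ j) (hkl : k ≠ l)
    (h : rvec i j = rvec k l) : i = k ∧ j = l := by
  have h1 := congrFun h i
  have h2 := congrFun h j
  rw [rvec_apply, rvec_apply] at h1 h2
  constructor
  · by_contra hik
    rw [if_pos rfl, if_neg hij, if_neg hik] at h1
    split_ifs at h1 <;> norm_num at h1
  · by_contra hjl
    rw [if_neg (fun h => hij h.symm), if_pos rfl, if_neg hjl] at h2
    split_ifs at h2 <;> norm_num at h2

lemma A7_eq : E7rootsA7 =
    (fun p : Fin 8 × Fin 8 => rvec p.1 p.2) '' ↑(Finset.univ.filter fun p : Fin 8 × Fin 8 => p.1 ≠ p.2) := by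
  ext v
  simp only [E7rootsA7, Set.mem_setOf_eq, Set.mem_image, Finset.coe_filter, Set.mem_setOf_eq,
    Finset.mem_univ, true_and, rvec]
  constructor
  · rintro ⟨i, j, hij, rfl⟩; exact ⟨(i, j), hij, rfl⟩
  · rintro ⟨⟨i, j⟩, hij, rfl⟩; exact ⟨i, j, hij, rfl⟩

noncomputable def ovec (s : Finset (Fin 8)) : Fin 8 → ℝ :=
  fun i => if i ∈ s then 1/2 else -(1/2)

lemma Other_eq : E7rootsOther =
    ovec '' ↑(Finset.univ.filter fun s : Finset (Fin 8) => s.card = 4) := by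
  classical
  ext v
  simp only [E7rootsOther, Set.mem_setOf_eq, Set.mem_image, Finset.coe_filter, Set.mem_setOf_eq,
    Finset.mem_univ, true_and]
  constructor
  · rintro ⟨h1, h2⟩
    refine ⟨Finset.univ.filter (fun i => v i = 1/2), ?_, ?_⟩
    · set s := Finset.univ.filter (fun i => v i = 1/2) with hs
      have hsum : ∑ i ∈ s, v i + ∑ i ∈ sᶜ, v i = 0 := by
        rw [Finset.sum_add_sum_compl]; exact h2
      have hv1 : ∀ i ∈ s, v i = 1/2 := fun i hi => (Finset.mem_filter.1 hi).2
      have hv2 : ∀ i ∈ sᶜ, v i = -(1/2) := by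
        intro i hi
        rcases h1 i with h | h
        · exact absurd (Finset.mem_filter.2 ⟨Finset.mem_univ i, h⟩) (Finset.mem_compl.1 hi)
        · exact h
      rw [Finset.sum_congr rfl hv1, Finset.sum_congr rfl hv2, Finset.sum_const,
        Finset.sum_const] at hsum
      have hcc : s.card + sᶜ.card = 8 := by
        have := Finset.card_add_card_compl s; simpa using this
      have : (s.card : ℝ) * (1/2) + (sᶜ.card : ℝ) * (-(1/2)) = 0 := by
        simpa [nsmul_eq_mul] using hsum
      have : (s.card : ℝ) = sᶜ.card := by linarith
      have h4 : s.card = sᶜ.card := Nat.cast_injective this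
      omega
    · funext i
      simp only [ovec, Finset.mem_filter, Finset.mem_univ, true_and]
      rcases h1 i with h | h <;> simp [h] <;> norm_num
  · rintro ⟨s, hs, rfl⟩
    refine ⟨fun i => ?_, ?_⟩
    · by_cases h : i ∈ s <;> simp [ovec, h]
    · rw [← Finset.sum_add_sum_compl s (ovec s)]
      have h1 : ∀ i ∈ s, ovec s i = 1/2 := fun i hi => by simp [ovec, hi]
      have h2 : ∀ i ∈ sᶜ, ovec s i = -(1/2) := fun i hi => by
        simp [ovec, Finset.mem_compl.1 hi]
      rw [Finset.sum_congr rfl h1, Finset.sum_congr rfl h2, Finset.sum_const, Finset.sum_const,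
        Finset.card_compl, hs]
      norm_num

lemma ovec_inj : Function.Injective ovec := by
  intro s t h
  ext i
  have := congrFun h i
  simp only [ovec] at this
  by_cases hs : i ∈ s <;> by_cases ht : i ∈ t <;> simp [hs, ht] at this ⊢ <;> norm_num at this

lemma other_card {v : Fin 8 → ℝ} (hv : v ∈ E7rootsOther) :
    ∃ s : Finset (Fin 8), s.card = 4 ∧ v = ovec s := by
  rw [Other_eq] at hv
  obtain ⟨s, hs, rfl⟩ := hv
  simp only [Finset.coe_filter, Set.mem_setOf_eq] at hs
  exact ⟨s, hs.2, rfl⟩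

/-- An even permutation sending `k ↦ i` and `l ↦ j`. -/
lemma exists_even_pair {i j k l : Fin 8} (hij : i ≠ j) (hkl : k ≠ l) :
    ∃ σ ∈ alternatingGroup (Fin 8), σ k = i ∧ σ l = j := by
  classical
  set τ : Perm (Fin 8) := (Equiv.swap (Equiv.swap k i l) j) * (Equiv.swap k i) with hτ
  have h1 : Equiv.swap k i l ≠ i := by
    intro h
    have h' := congrArg (Equiv.swap k i) h
    rw [Equiv.swap_apply_self, Equiv.swap_apply_right] at h'
    exact hkl h'.symm
  have hτk : τ k = i := by
    simp only [hτ, Perm.mul_apply, Equiv.swap_apply_left]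
    exact Equiv.swap_apply_of_ne_of_ne (Ne.symm h1) hij
  have hτl : τ l = j := by
    simp only [hτ, Perm.mul_apply]
    exact Equiv.swap_apply_left _ _
  -- pick two elements not in {k, l}
  have hcard : 1 < ({k, l}ᶜ : Finset (Fin 8)).card := by
    rw [Finset.card_compl]
    have : ({k, l} : Finset (Fin 8)).card ≤ 2 := Finset.card_insert_le _ _ |>.trans (by simp)
    simp only [Fintype.card_fin]
    omega
  obtain ⟨a, ha, b, hb, hab⟩ := Finset.one_lt_card.1 hcard
  simp only [Finset.mem_compl, Finset.mem_insert, Finset.mem_singleton, not_or] at ha hb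
  rcases Int.units_eq_one_or (Perm.sign τ) with hsign | hsign
  · exact ⟨τ, hsign, hτk, hτl⟩
  · refine ⟨τ * Equiv.swap a b, ?_, ?_, ?_⟩
    · have : Perm.sign (τ * Equiv.swap a b) = Perm.sign τ * Perm.sign (Equiv.swap a b) :=
        map_mul _ _ _
      rw [Equiv.Perm.mem_alternatingGroup, this, hsign, Equiv.Perm.sign_swap hab]
      decide
    · simp [Perm.mul_apply, Equiv.swap_apply_of_ne_of_ne (Ne.symm ha.1) (Ne.symm hb.1), hτk]
    · simp [Perm.mul_apply, Equiv.swap_apply_of_ne_of_ne (Ne.symm ha.2) (Ne.symm hb.2), hτl]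

lemma swap_mem_iff {a b m : Fin 8} {t : Finset (Fin 8)} (ha : a ∉ t) (hb : b ∉ t) :
    Equiv.swap a b m ∈ t ↔ m ∈ t := by
  rcases eq_or_ne m a with rfl | hma
  · simp [Equiv.swap_apply_left, ha, hb]
  rcases eq_or_ne m b with rfl | hmb
  · simp [Equiv.swap_apply_right, ha, hb]
  · rw [Equiv.swap_apply_of_ne_of_ne hma hmb]

/-- An even permutation with `σ m ∈ s ↔ m ∈ t`. -/
lemma exists_even_sets {s t : Finset (Fin 8)} (hs : s.card = 4) (ht : t.card = 4) :
    ∃ σ ∈ alternatingGroup (Fin 8), ∀ m, σ m ∈ s ↔ m ∈ t := by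
  classical
  have hcc : tᶜ.card = sᶜ.card := by
    rw [Finset.card_compl, Finset.card_compl, hs, ht]
  have e : {x // x ∈ t} ≃ {x // x ∈ s} := Finset.equivOfCardEq (ht.trans hs.symm)
  have f : {x // x ∈ tᶜ} ≃ {x // x ∈ sᶜ} := Finset.equivOfCardEq hcc
  have f' : {x // ¬ x ∈ t} ≃ {x // ¬ x ∈ s} :=
    ((Equiv.subtypeEquivRight (fun x => Finset.mem_compl)).symm.trans f).trans
      (Equiv.subtypeEquivRight (fun x => Finset.mem_compl))
  set τ : Perm (Fin 8) :=
    ((Equiv.sumCompl (· ∈ t)).symm.trans ((e.sumCongr f').trans (Equiv.sumCompl (· ∈ s)))) with hτ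
  have key : ∀ m, τ m ∈ s ↔ m ∈ t := by
    intro m
    by_cases hm : m ∈ t
    · simp only [hτ, Equiv.trans_apply, Equiv.sumCompl_symm_apply_of_pos hm,
        Equiv.sumCongr_apply, Sum.map_inl, Equiv.sumCompl_apply_inl]
      exact iff_of_true (e ⟨m, hm⟩).2 hm
    · simp only [hτ, Equiv.trans_apply, Equiv.sumCompl_symm_apply_of_neg hm,
        Equiv.sumCongr_apply, Sum.map_inr, Equiv.sumCompl_apply_inr]
      exact iff_of_false (f' ⟨m, hm⟩).2 hm
  have hcard : 1 < (tᶜ : Finset (Fin 8)).card := by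
    rw [Finset.card_compl, ht]; decide
  obtain ⟨a, ha, b, hb, hab⟩ := Finset.one_lt_card.1 hcard
  rw [Finset.mem_compl] at ha hb
  rcases Int.units_eq_one_or (Perm.sign τ) with hsign | hsign
  · exact ⟨τ, hsign, key⟩
  · refine ⟨τ * Equiv.swap a b, ?_, fun m => ?_⟩
    · rw [Equiv.Perm.mem_alternatingGroup, map_mul, hsign, Equiv.Perm.sign_swap hab]
      decide
    · rw [Perm.mul_apply, key, swap_mem_iff ha hb]

theorem stmt_6' :
    E7rootsA7.ncard = 56 ∧ E7rootsOther.ncard = 70 ∧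
    Disjoint E7rootsA7 E7rootsOther ∧
    (E7rootsA7 ∪ E7rootsOther).ncard = 126 ∧
    (∀ σ : Equiv.Perm (Fin 8), ∀ v ∈ E7rootsA7, v ∘ σ ∈ E7rootsA7) ∧
    (∀ σ : Equiv.Perm (Fin 8), ∀ v ∈ E7rootsOther, v ∘ σ ∈ E7rootsOther) ∧
    (∀ v ∈ E7rootsA7, ∀ w ∈ E7rootsA7,
      ∃ σ ∈ alternatingGroup (Fin 8), w = v ∘ σ) ∧
    (∀ v ∈ E7rootsOther, ∀ w ∈ E7rootsOther,
      ∃ σ ∈ alternatingGroup (Fin 8), w = v ∘ σ) := by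
  classical
  have hA7card : E7rootsA7.ncard = 56 := by
    rw [A7_eq, Set.ncard_image_of_injOn, Set.ncard_coe_finset]
    · decide
    · rintro ⟨i, j⟩ hij ⟨k, l⟩ hkl h
      simp only [Finset.coe_filter, Set.mem_setOf_eq] at hij hkl
      obtain ⟨h1, h2⟩ := rvec_inj hij.2 hkl.2 h
      simp [h1, h2]
  have hOcard : E7rootsOther.ncard = 70 := by
    rw [Other_eq, Set.ncard_image_of_injOn (ovec_inj.injOn), Set.ncard_coe_finset]
    decide
  have hdisj : Disjoint E7rootsA7 E7rootsOther := by
    rw [Set.disjoint_left]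
    rintro v ⟨i, j, hij, rfl⟩ ⟨h1, _⟩
    have := h1 i
    have hvi : (Pi.single i 1 - Pi.single j 1 : Fin 8 → ℝ) i = 1 := by
      simp [Pi.single_apply, hij, Ne.symm hij]
    rw [hvi] at this
    rcases this with h | h <;> norm_num at h
  have hA7fin : E7rootsA7.Finite := by
    rw [A7_eq]; exact (Set.toFinite _).image _
  have hOfin : E7rootsOther.Finite := by
    rw [Other_eq]; exact (Set.toFinite _).image _
  refine ⟨hA7card, hOcard, hdisj, ?_, ?_, ?_, ?_, ?_⟩
  · rw [Set.ncard_union_eq hdisj hA7fin hOfin, hA7card, hOcard]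
  · rintro σ v ⟨i, j, hij, rfl⟩
    refine ⟨σ⁻¹ i, σ⁻¹ j, fun h => hij (by simpa using congrArg σ h), ?_⟩
    funext k
    have e1 : σ k = i ↔ k = σ⁻¹ i := ⟨fun h => by simp [← h], fun h => by simp [h]⟩
    have e2 : σ k = j ↔ k = σ⁻¹ j := ⟨fun h => by simp [← h], fun h => by simp [h]⟩
    simp [Function.comp_apply, Pi.sub_apply, Pi.single_apply, e1, e2]
  · rintro σ v ⟨h1, h2⟩
    refine ⟨fun i => h1 (σ i), ?_⟩
    rw [← h2]
    exact Equiv.sum_comp σ v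
  · rintro v ⟨i, j, hij, rfl⟩ w ⟨k, l, hkl, rfl⟩
    obtain ⟨σ, hσ, hk, hl⟩ := exists_even_pair hij hkl
    refine ⟨σ, hσ, ?_⟩
    funext m
    show rvec k l m = rvec i j (σ m)
    rw [rvec_apply, rvec_apply]
    have h1 : σ m = i ↔ m = k := by
      rw [← hk]; exact ⟨fun h => σ.injective h, fun h => h ▸ rfl⟩
    have h2 : σ m = j ↔ m = l := by
      rw [← hl]; exact ⟨fun h => σ.injective h, fun h => h ▸ rfl⟩
    simp [h1, h2]
  · intro v hv w hw
    obtain ⟨s, hs, rfl⟩ := other_card hv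
    obtain ⟨t, ht, rfl⟩ := other_card hw
    obtain ⟨σ, hσ, key⟩ := exists_even_sets hs ht
    refine ⟨σ, hσ, ?_⟩
    funext m
    show ovec t m = ovec s (σ m)
    simp only [ovec, key m]

/-- The root system `Φ` of type `E_7` has 126 roots and decomposes, under the action of
`W(A_7) ≅ S_8` (acting through the sub-root system `Φ'` of type `A_7` of the extended
Dynkin diagram, i.e. by permuting the 8 coordinates), into exactly two orbits, of sizes
56 and 70; moreover each of the two sets is already a single orbit under the alternating
subgroup `A_8 ⊆ S_8`. -/
theorem stmt_6 :
    E7rootsA7.ncard = 56 ∧ E7rootsOther.ncard = 70 ∧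
    Disjoint E7rootsA7 E7rootsOther ∧
    (E7rootsA7 ∪ E7rootsOther).ncard = 126 ∧
    (∀ σ : Equiv.Perm (Fin 8), ∀ v ∈ E7rootsA7, v ∘ σ ∈ E7rootsA7) ∧
    (∀ σ : Equiv.Perm (Fin 8), ∀ v ∈ E7rootsOther, v ∘ σ ∈ E7rootsOther) ∧
    (∀ v ∈ E7rootsA7, ∀ w ∈ E7rootsA7,
      ∃ σ ∈ alternatingGroup (Fin 8), w = v ∘ σ) ∧
    (∀ v ∈ E7rootsOther, ∀ w ∈ E7rootsOther,
      ∃ σ ∈ alternatingGroup (Fin 8), w = v ∘ σ) := by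
  exact stmt_6'
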